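/- Let (a, b, c, d) be an oriented orthonormal basis of the quaternions ℍ ≅ ℝ⁴ (orthonormal with respect to ⟨x, y⟩ = Re(x̄ y), and with determinant +1 when the four quaternions are written in the basis 1, i, j, k). Then b̄ a = −d̄ c. Consequently, in the octonions the operators r_T(q) = (a𝐞)·((b𝐞)·q) and r_N(q) = (c𝐞)·((d𝐞)·q) on ℍ ⊂ 𝕆 satisfy r_N = −r_T, each squares to −id, and they determine the same decomposition of ℍ into two 2-dimensional eigenspaces. (This is the content of the lemma that the operator r_T = γ(e¹)γ(e²) on the negative spinor space S⁻ agrees, up to Clifford sign convention, with r_N = γ(ν¹)γ(ν²), so the eigenbundle decomposition S⁻|_M = V₊ⱼ ⊕ V₋ⱼ can be defined using either the tangent or the normal frame of the surface.) -/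

import Mathlib

noncomputable section

/-- The octonions as pairs of quaternions, `𝕆 = ℍ × ℍ`. -/
abbrev Octo := Quaternion ℝ × Quaternion ℝ

/-- Cayley–Dickson multiplication `(a,b)·(c,d) = (ac − d̄b, da + bc̄)`. -/
def omul (x y : Octo) : Octo :=
  (x.1 * y.1 - star y.2 * x.2, y.2 * x.1 + x.2 * star y.1)

/-- The operator `q ↦ (a𝐞)·((b𝐞)·q)` on `ℍ ⊂ 𝕆`. -/
def rOp (a b : Quaternion ℝ) (q : Quaternion ℝ) : Quaternion ℝ :=
  (omul ((0 : Quaternion ℝ), a) (omul ((0 : Quaternion ℝ), b) (q, (0 : Quaternion ℝ)))).1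

/-- Explicit expansion of a `4 × 4` determinant. -/
theorem det4_aux (M : Matrix (Fin 4) (Fin 4) ℝ) : M.det =
    M 0 0 * (M 1 1 * (M 2 2 * M 3 3 - M 2 3 * M 3 2) - M 1 2 * (M 2 1 * M 3 3 - M 2 3 * M 3 1)
      + M 1 3 * (M 2 1 * M 3 2 - M 2 2 * M 3 1))
  - M 0 1 * (M 1 0 * (M 2 2 * M 3 3 - M 2 3 * M 3 2) - M 1 2 * (M 2 0 * M 3 3 - M 2 3 * M 3 0)
      + M 1 3 * (M 2 0 * M 3 2 - M 2 2 * M 3 0))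
  + M 0 2 * (M 1 0 * (M 2 1 * M 3 3 - M 2 3 * M 3 1) - M 1 1 * (M 2 0 * M 3 3 - M 2 3 * M 3 0)
      + M 1 3 * (M 2 0 * M 3 1 - M 2 1 * M 3 0))
  - M 0 3 * (M 1 0 * (M 2 1 * M 3 2 - M 2 2 * M 3 1) - M 1 1 * (M 2 0 * M 3 2 - M 2 2 * M 3 0)
      + M 1 2 * (M 2 0 * M 3 1 - M 2 1 * M 3 0)) := by
  rw [Matrix.det_succ_row_zero]
  simp [Fin.sum_univ_succ, Matrix.det_fin_three, Matrix.submatrix_apply, Fin.succAbove,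
    show (2:Fin 3).succ = 3 from rfl, show Fin.castSucc (2:Fin 3) = 2 from rfl]
  ring

/-- The inner product between `b̄a` and `d̄c` equals minus the determinant, given
orthogonality. -/
theorem key_aux (a b c d : Quaternion ℝ)
    (hbc : (star b * c).re = 0) (hbd : (star b * d).re = 0) (hcd : (star c * d).re = 0)
    (hdet : Matrix.det !![a.re, b.re, c.re, d.re;
                          a.imI, b.imI, c.imI, d.imI;
                          a.imJ, b.imJ, c.imJ, d.imJ;
                          a.imK, b.imK, c.imK, d.imK] = 1) :
    (star b * a * star (star d * c)).re = -1 := by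
  rw [det4_aux] at hdet
  norm_num [Matrix.cons_val_zero, Matrix.cons_val_one, Matrix.head_cons, Matrix.cons_val_two,
    Matrix.cons_val_three, Matrix.tail_cons] at hdet
  simp only [Quaternion.re_mul, Quaternion.imI_mul, Quaternion.imJ_mul, Quaternion.imK_mul,
    Quaternion.re_star, Quaternion.imI_star, Quaternion.imJ_star,
    Quaternion.imK_star] at hbc hbd hcd ⊢
  linear_combination (-hdet) + (a.re*b.re + a.imI*b.imI + a.imJ*b.imJ + a.imK*b.imK) * hcd
    - (a.re*d.re + a.imI*d.imI + a.imJ*d.imJ + a.imK*d.imK) * hbc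
    + (a.re*c.re + a.imI*c.imI + a.imJ*c.imJ + a.imK*c.imK) * hbd

theorem normSq_add_aux (x y : Quaternion ℝ) :
    Quaternion.normSq (x + y)
      = Quaternion.normSq x + Quaternion.normSq y + 2 * (x * star y).re := by
  simp only [Quaternion.normSq_def', Quaternion.re_add, Quaternion.imI_add, Quaternion.imJ_add,
    Quaternion.imK_add, Quaternion.re_mul, Quaternion.re_star, Quaternion.imI_star,
    Quaternion.imJ_star, Quaternion.imK_star]
  ring

theorem rOp_eq_aux (x y q : Quaternion ℝ) : rOp x y q = -(q * (star y * x)) := by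
  simp [rOp, omul, star_mul, star_star, mul_assoc]

/-- for an oriented orthonormal basis `(a,b,c,d)` of `ℍ ≅ ℝ⁴`,
one has `b̄a = −d̄c`; hence the operators `r_T(q) = (a𝐞)((b𝐞)q)` and
`r_N(q) = (c𝐞)((d𝐞)q)` satisfy `r_N = −r_T`, each squares to `−id`, and they
determine the same decomposition of `ℍ` into two 2-dimensional eigenspaces. -/
theorem stmt12 (a b c d : Quaternion ℝ)
    (ha : ‖a‖ = 1) (hb : ‖b‖ = 1) (hc : ‖c‖ = 1) (hd : ‖d‖ = 1)
    (hab : (star a * b).re = 0) (hac : (star a * c).re = 0) (had : (star a * d).re = 0)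
    (hbc : (star b * c).re = 0) (hbd : (star b * d).re = 0) (hcd : (star c * d).re = 0)
    (hdet : Matrix.det !![a.re, b.re, c.re, d.re;
                          a.imI, b.imI, c.imI, d.imI;
                          a.imJ, b.imJ, c.imJ, d.imJ;
                          a.imK, b.imK, c.imK, d.imK] = 1) :
    star b * a = -(star d * c) ∧
    (∀ q : Quaternion ℝ, rOp c d q = -(rOp a b q)) ∧
    (∀ q : Quaternion ℝ, rOp a b (rOp a b q) = -q) ∧
    (∀ q : Quaternion ℝ, rOp c d (rOp c d q) = -q) ∧
    ({q : Quaternion ℝ | rOp a b q = -(star b * a) * q}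
      = {q : Quaternion ℝ | rOp c d q = -(-(star b * a) * q)}) ∧
    ({q : Quaternion ℝ | rOp a b q = -(-(star b * a) * q)}
      = {q : Quaternion ℝ | rOp c d q = -(star b * a) * q}) := by
  have key := key_aux a b c d hbc hbd hcd hdet
  have huv : star b * a = -(star d * c) := by
    have h1 : Quaternion.normSq (star b * a + star d * c) = 0 := by
      rw [normSq_add_aux, key, map_mul, map_mul, Quaternion.normSq_star, Quaternion.normSq_star,
        Quaternion.normSq_eq_norm_mul_self, Quaternion.normSq_eq_norm_mul_self,
        Quaternion.normSq_eq_norm_mul_self, Quaternion.normSq_eq_norm_mul_self, ha, hb, hc, hd]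
      ring
    have h2 := Quaternion.normSq_eq_zero.mp h1
    exact eq_neg_of_add_eq_zero_left h2
  have hdc : star d * c = -(star b * a) := by rw [huv, neg_neg]
  have hure : (star b * a).re = 0 := by
    have h : (star (star a * b)).re = 0 := by rw [Quaternion.re_star]; exact hab
    simpa [star_mul] using h
  have hnu : Quaternion.normSq (star b * a) = 1 := by
    rw [map_mul, Quaternion.normSq_star, Quaternion.normSq_eq_norm_mul_self,
      Quaternion.normSq_eq_norm_mul_self, ha, hb]
    ring
  have husq : (star b * a) * (star b * a) = -1 := by
    have hs : star (star b * a) = -(star b * a) := Quaternion.star_eq_neg.mpr hure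
    have hn := Quaternion.self_mul_star (star b * a)
    rw [hs, mul_neg, hnu] at hn
    have h3 := neg_eq_iff_eq_neg.mp hn
    simpa using h3
  have hvsq : (star d * c) * (star d * c) = -1 := by
    rw [hdc, neg_mul_neg, husq]
  refine ⟨huv, ?_, ?_, ?_, ?_, ?_⟩
  · intro q
    rw [rOp_eq_aux, rOp_eq_aux, hdc]
    simp [mul_neg]
  · intro q
    rw [rOp_eq_aux, rOp_eq_aux, neg_mul, neg_neg, mul_assoc, husq]
    simp
  · intro q
    rw [rOp_eq_aux, rOp_eq_aux, neg_mul, neg_neg, mul_assoc, hvsq]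
    simp
  · ext q
    simp only [Set.mem_setOf_eq, rOp_eq_aux, hdc, mul_neg, neg_neg, neg_mul, neg_inj]
  · ext q
    simp only [Set.mem_setOf_eq, rOp_eq_aux, hdc, mul_neg, neg_neg, neg_mul, neg_inj]
    constructor
    · intro h
      exact neg_eq_iff_eq_neg.mp h
    · intro h
      exact neg_eq_iff_eq_neg.mpr h
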